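/- Fix ℓ ≥ 1 and integers n ≥ k ≥ 1. Let z be the sequence with z_j = j! for all j ≥ 1 except z_{ℓ+1} = 0. Then B_{n,k}(z₁, z₂, …) = (n!/k!) · ( Σ_{κ=0}^{k−1, (ℓ+1)κ ≤ n−1} (−1)^κ · C(k, κ) · C(n − (ℓ+1)κ − 1, k − κ − 1) + (−1)^k · δ_{n, (ℓ+1)k} ), where δ_{n,(ℓ+1)k} is the Kronecker delta. -/

import Mathlib

/-- The invert transform of a sequence `x : ℕ → ℚ` (indexed from 1, `x 0` ignored):
`(𝒴x)(0) = 0` and `(𝒴x)(n) = x n + ∑_{j=1}^{n-1} x j * (𝒴x)(n-j)` for `n ≥ 1`. -/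
def invert (x : ℕ → ℚ) : ℕ → ℚ
  | 0 => 0
  | n + 1 => x (n + 1) + ∑ j ∈ Finset.range n, x (j + 1) * invert x (n - j)
  termination_by n => n
  decreasing_by omega

/-- The partial Bell polynomial `B_{n,k}(z₁, z₂, …)`, evaluated at a sequence of rationals
`z` (indexed from 1, `z 0` ignored): the sum over all finitely supported `α : ℕ → ℕ` with
`α 0 = 0`, `∑ i, α i = k` and `∑ i, i * α i = n` of `(n! / ∏ i, (α i)!) * ∏ i (z i / i!)^(α i)`. -/
def partialBell (n k : ℕ) (z : ℕ → ℚ) : ℚ :=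
  ∑ α ∈ ((Finset.range (n + 1)).finsuppAntidiag k).filter
      (fun α => (∑ i ∈ Finset.range (n + 1), i * α i) = n ∧ α 0 = 0),
    ((n.factorial : ℚ) / ∏ i ∈ Finset.range (n + 1), ((α i).factorial : ℚ)) *
      ∏ i ∈ Finset.range (n + 1), (z i / (i.factorial : ℚ)) ^ α i

open Finset PowerSeries


noncomputable def Sser : ℚ⟦X⟧ := X * PowerSeries.mk 1

lemma coeff_Sser (i : ℕ) : PowerSeries.coeff i Sser = if i = 0 then 0 else 1 := by
  cases i with
  | zero => simp [Sser]
  | succ m => simp [Sser, coeff_succ_X_mul]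

lemma coeff_Sser_pow (r m : ℕ) (hr : 1 ≤ r) :
    PowerSeries.coeff m (Sser ^ r)
      = if 1 ≤ m then ((m - 1).choose (r - 1) : ℚ) else 0 := by
  obtain ⟨d, rfl⟩ : ∃ d, r = d + 1 := ⟨r - 1, by omega⟩
  rw [Sser, mul_pow, mk_one_pow_eq_mk_choose_add, coeff_X_pow_mul']
  rcases le_or_gt (d + 1) m with h | h
  · rw [if_pos h, coeff_mk, if_pos (by omega)]
    congr 2
    omega
  · rw [if_neg (by omega)]
    rcases Nat.eq_zero_or_pos m with rfl | hm
    · simp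
    · rw [if_pos (show 1 ≤ m from hm), Nat.choose_eq_zero_of_lt (by omega : m - 1 < d + 1 - 1), Nat.cast_zero]

lemma sum_finsuppAntidiag_pi {M : Type*} [AddCommMonoid M] (s : Finset ℕ) (kk : ℕ)
    (G : (ℕ → ℕ) → M) :
    ∑ α ∈ s.finsuppAntidiag kk, G ⇑α = ∑ β ∈ Finset.piAntidiag s kk, G β := by
  rw [Finset.finsuppAntidiag, Finset.sum_map]
  show ∑ x ∈ (Finset.piAntidiag s kk).attach, G x.1 = _
  exact Finset.sum_attach _ _

lemma coeff_pow_sum (n kk : ℕ) (u : ℕ → ℚ) :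
    PowerSeries.coeff n
        ((∑ i ∈ range (n + 1), PowerSeries.C (u i) * X ^ i) ^ kk)
      = ∑ β ∈ piAntidiag (range (n + 1)) kk,
          if (∑ i ∈ range (n + 1), i * β i) = n
          then (Nat.multinomial (range (n + 1)) β : ℚ) * ∏ i ∈ range (n + 1), u i ^ β i
          else 0 := by
  rw [Finset.sum_pow_eq_sum_piAntidiag, map_sum]
  refine sum_congr rfl fun β hβ => ?_
  have hprod : ∏ i ∈ range (n + 1), (PowerSeries.C (u i) * X ^ i) ^ β i
      = PowerSeries.C (∏ i ∈ range (n + 1), u i ^ β i)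
          * X ^ (∑ i ∈ range (n + 1), i * β i) := by
    rw [map_prod, ← Finset.prod_pow_eq_pow_sum, ← Finset.prod_mul_distrib]
    refine prod_congr rfl fun i _ => ?_
    rw [mul_pow, map_pow, ← pow_mul]
  rw [hprod, show ((Nat.multinomial (range (n + 1)) β : ℚ⟦X⟧)) = PowerSeries.C
      ((Nat.multinomial (range (n + 1)) β : ℚ)) by rw [map_natCast], ← mul_assoc, ← map_mul,
    coeff_C_mul, coeff_X_pow]
  split_ifs with h1 h2 h2
  · rw [mul_one]
  · omega
  · omega
  · rw [mul_zero]

lemma coeff_pow_congr (f g : ℚ⟦X⟧) (n kk : ℕ)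
    (h : ∀ i, i ≤ n → PowerSeries.coeff i f = PowerSeries.coeff i g) :
    PowerSeries.coeff n (f ^ kk) = PowerSeries.coeff n (g ^ kk) := by
  have htr : trunc (n + 1) f = trunc (n + 1) g := by
    apply Polynomial.ext
    intro m
    rw [coeff_trunc, coeff_trunc]
    split_ifs with hm
    · exact h m (by omega)
    · rfl
  have h1 : trunc (n + 1) (f ^ kk) = trunc (n + 1) (g ^ kk) := by
    rw [← trunc_trunc_pow f, ← trunc_trunc_pow g, htr]
  have h2 := congrArg (fun p => Polynomial.coeff p n) h1
  simpa [coeff_trunc] using h2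

lemma coeff_sub_pow (ℓ n k : ℕ) (hk : 1 ≤ k) (hkn : k ≤ n) :
    PowerSeries.coeff n ((Sser - X ^ (ℓ + 1)) ^ k)
      = (∑ κ ∈ (Finset.range k).filter (fun κ => (ℓ + 1) * κ ≤ n - 1),
            (-1 : ℚ) ^ κ * (k.choose κ : ℚ) *
              ((n - (ℓ + 1) * κ - 1).choose (k - κ - 1) : ℚ))
          + (if n = (ℓ + 1) * k then (-1 : ℚ) ^ k else 0) := by
  rw [sub_pow, map_sum]
  have hterm : ∀ m ∈ range (k + 1),
      PowerSeries.coeff n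
          ((-1 : ℚ⟦X⟧) ^ (m + k) * Sser ^ m * (X ^ (ℓ + 1)) ^ (k - m) * (k.choose m : ℚ⟦X⟧))
        = (-1 : ℚ) ^ (m + k) * (k.choose m : ℚ) *
            (if (ℓ + 1) * (k - m) ≤ n
             then PowerSeries.coeff (n - (ℓ + 1) * (k - m)) (Sser ^ m) else 0) := by
    intro m _
    rw [show ((-1 : ℚ⟦X⟧) ^ (m + k) * Sser ^ m * (X ^ (ℓ + 1)) ^ (k - m) * (k.choose m : ℚ⟦X⟧))
        = PowerSeries.C ((-1 : ℚ) ^ (m + k) * (k.choose m : ℚ))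
            * (Sser ^ m * X ^ ((ℓ + 1) * (k - m))) from by
      rw [← pow_mul, map_mul, map_pow, map_neg, map_one, map_natCast]; ring]
    rw [coeff_C_mul, coeff_mul_X_pow', mul_assoc]
  rw [Finset.sum_congr rfl hterm, ← Finset.sum_range_reflect, sum_range_succ]
  congr 1
  · rw [sum_filter]
    refine sum_congr rfl fun κ hκ => ?_
    rw [mem_range] at hκ
    have h1 : k + 1 - 1 - κ = k - κ := by omega
    rw [h1, show k - (k - κ) = κ by omega, coeff_Sser_pow (k - κ) _ (by omega),
      show (-1 : ℚ) ^ ((k - κ) + k) = (-1) ^ κ from by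
        rw [show (k - κ) + k = κ + 2 * (k - κ) by omega, pow_add, pow_mul]; simp,
      Nat.choose_symm (by omega : κ ≤ k)]
    split_ifs
    all_goals first | (exfalso; omega) | ring
  · rw [show k + 1 - 1 - k = 0 by omega, show k - 0 = k by omega, pow_zero, zero_add,
      Nat.choose_zero_right, Nat.cast_one, mul_one]
    split_ifs with h1 h2 h2
    · rw [coeff_one, if_pos (by omega), mul_one]
    · rw [coeff_one, if_neg (by omega), mul_zero]
    · exfalso; omega
    · rw [mul_zero]

/-- Bell identity 3: for `ℓ ≥ 1` and `n ≥ k ≥ 1`,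
`B_{n,k}(1!, …, ℓ!, 0, (ℓ+2)!, (ℓ+3)!, …) = (n!/k!) (∑_{κ<k, (ℓ+1)κ≤n-1}
(-1)^κ C(k,κ) C(n-(ℓ+1)κ-1, k-κ-1) + (-1)^k δ_{n,(ℓ+1)k})`. -/
theorem stmt_18 (ℓ : ℕ) (hℓ : 1 ≤ ℓ) (n k : ℕ) (hk : 1 ≤ k) (hkn : k ≤ n)
    (z : ℕ → ℚ) (hz : ∀ j, 1 ≤ j → z j = if j = ℓ + 1 then 0 else (j.factorial : ℚ)) :
    partialBell n k z
      = ((n.factorial : ℚ) / (k.factorial : ℚ)) *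
          ((∑ κ ∈ (Finset.range k).filter (fun κ => (ℓ + 1) * κ ≤ n - 1),
              (-1 : ℚ) ^ κ * (k.choose κ : ℚ) *
                ((n - (ℓ + 1) * κ - 1).choose (k - κ - 1) : ℚ))
            + (if n = (ℓ + 1) * k then (-1 : ℚ) ^ k else 0)) := by
  set u : ℕ → ℚ := fun i => if i = 0 ∨ i = ℓ + 1 then 0 else 1 with hu
  have stepA : partialBell n k z
      = ((n.factorial : ℚ) / (k.factorial : ℚ)) *
          ∑ β ∈ piAntidiag (range (n + 1)) k,
            (if (∑ i ∈ range (n + 1), i * β i) = n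
             then (Nat.multinomial (range (n + 1)) β : ℚ) * ∏ i ∈ range (n + 1), u i ^ β i
             else 0) := by
    have e1 : partialBell n k z
        = ∑ α ∈ (Finset.range (n + 1)).finsuppAntidiag k,
            (fun β : ℕ → ℕ =>
              if ((∑ i ∈ Finset.range (n + 1), i * β i) = n ∧ β 0 = 0)
              then ((n.factorial : ℚ) / ∏ i ∈ Finset.range (n + 1), ((β i).factorial : ℚ)) *
                ∏ i ∈ Finset.range (n + 1), (z i / (i.factorial : ℚ)) ^ β i
              else 0) ⇑α := by
      rw [partialBell, sum_filter]
    rw [e1, sum_finsuppAntidiag_pi (Finset.range (n + 1)) k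
      (fun β : ℕ → ℕ =>
        if ((∑ i ∈ Finset.range (n + 1), i * β i) = n ∧ β 0 = 0)
        then ((n.factorial : ℚ) / ∏ i ∈ Finset.range (n + 1), ((β i).factorial : ℚ)) *
          ∏ i ∈ Finset.range (n + 1), (z i / (i.factorial : ℚ)) ^ β i
        else 0), mul_sum]
    refine sum_congr rfl fun β hβ => ?_
    obtain ⟨hsumk, -⟩ := mem_piAntidiag.1 hβ
    by_cases hb0 : β 0 = 0
    · by_cases hA : (∑ i ∈ range (n + 1), i * β i) = n
      · rw [if_pos ⟨hA, hb0⟩, if_pos hA]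
        have hprod : ∏ i ∈ range (n + 1), (z i / (i.factorial : ℚ)) ^ β i
            = ∏ i ∈ range (n + 1), u i ^ β i := by
          refine prod_congr rfl fun i _ => ?_
          rcases Nat.eq_zero_or_pos i with rfl | hi
          · rw [hb0, pow_zero, pow_zero]
          · rw [hz i hi]
            congr 1
            by_cases hil : i = ℓ + 1
            · simp [hu, hil]
            · simp only [hu]
              rw [if_neg hil, if_neg (by rintro (h | h) <;> omega)]
              exact div_self (Nat.cast_ne_zero.mpr i.factorial_ne_zero)
        rw [hprod]
        have hspec := Nat.multinomial_spec (range (n + 1)) β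
        rw [hsumk] at hspec
        have hQ : (∏ i ∈ range (n + 1), ((β i).factorial : ℚ))
            * (Nat.multinomial (range (n + 1)) β : ℚ) = (k.factorial : ℚ) := by
          exact_mod_cast congrArg (Nat.cast : ℕ → ℚ) hspec
        have h1 : (∏ i ∈ range (n + 1), ((β i).factorial : ℚ)) ≠ 0 :=
          prod_ne_zero_iff.2 fun i _ => by exact_mod_cast (β i).factorial_ne_zero
        have h2 : (k.factorial : ℚ) ≠ 0 := by exact_mod_cast k.factorial_ne_zero
        have key : (n.factorial : ℚ) / (∏ i ∈ range (n + 1), ((β i).factorial : ℚ))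
            = (n.factorial : ℚ) / (k.factorial : ℚ)
              * (Nat.multinomial (range (n + 1)) β : ℚ) := by
          rw [div_mul_eq_mul_div, div_eq_div_iff h1 h2]
          first
            | linear_combination (n.factorial : ℚ) * hQ
            | linear_combination (-(n.factorial : ℚ)) * hQ
        rw [key, mul_assoc]
      · rw [if_neg (by simp [hA]), if_neg hA, mul_zero]
    · rw [if_neg (fun h => hb0 h.2)]
      have hz0 : ∏ i ∈ range (n + 1), u i ^ β i = 0 := by
        refine prod_eq_zero (mem_range.2 n.succ_pos) ?_
        rw [hu]
        simp only [if_pos (Or.inl rfl)]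
        exact zero_pow hb0
      rw [hz0]
      split_ifs <;> simp
  rw [stepA, ← coeff_pow_sum n k u]
  have stepC : PowerSeries.coeff n
        ((∑ i ∈ range (n + 1), PowerSeries.C (u i) * X ^ i) ^ k)
      = PowerSeries.coeff n ((Sser - X ^ (ℓ + 1)) ^ k) := by
    apply coeff_pow_congr
    intro i hi
    rw [map_sum, map_sub, coeff_Sser, coeff_X_pow]
    rw [Finset.sum_eq_single i]
    · rw [coeff_C_mul, coeff_X_pow, if_pos rfl, mul_one, hu]
      by_cases h0 : i = 0
      · simp [h0]
      · by_cases hil : i = ℓ + 1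
        · simp [hil]
        · simp [h0, hil]
    · intro j _ hj
      rw [coeff_C_mul, coeff_X_pow, if_neg (fun h => hj h.symm), mul_zero]
    · intro h
      exact absurd (mem_range.2 (by omega)) h
  rw [stepC, coeff_sub_pow ℓ n k hk hkn]
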